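/- Let P be a centrally symmetric convex 2m-gon in the plane centered at the origin, and suppose P + X is a k-fold translative tiling of the plane for a discrete multiset X. Then for every vertex v of a translate of P in the tiling, k equals φ(v) + ψ(v), where φ(v) is the total winding multiplicity (1/(2π) times the sum of all inner angles at v over all adjacent wheels of translates having v on their boundary) and ψ(v) is the number of translates P + x_i with v in the interior of P + x_i. -/

import Mathlib

open MeasureTheory Pointwise

open ENNReal

/-- Multiplicity identity for `k`-fold translative tilings by a centrally symmetric
convex `2m`-gon `P`: at every vertex `v` of a translate, `k = φ(v) + ψ(v)`, where
`ψ(v)` counts translates whose interior contains `v`, and `φ(v)` is the total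
angular (winding) multiplicity at `v`, i.e. the sum over translates having `v`
on their boundary of the inner angle at `v` divided by `2π`; the latter is the
local area density `θ i` of the translate at `v`. -/
theorem stmt_0 (m k : ℕ) (hm : 2 ≤ m) (hk : 0 < k)
    (V : ZMod (2 * m) → ℝ × ℝ) (hVinj : Function.Injective V)
    (P : Set (ℝ × ℝ))
    (hP : P = convexHull ℝ (Set.range V))
    (hsym : ∀ p ∈ P, -p ∈ P)
    (x : ℕ → ℝ × ℝ)
    (hdisc : ∀ K : Set (ℝ × ℝ), IsCompact K → {i | ((x i +ᵥ P) ∩ K).Nonempty}.Finite)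
    (htile : ∀ p : ℝ × ℝ,
      k ≤ {i | p ∈ x i +ᵥ P}.ncard ∧ {i | p ∈ x i +ᵥ interior P}.ncard ≤ k)
    (v : ℝ × ℝ) (hv : ∃ i j, v = x i + V j)
    (θ : ℕ → ℝ)
    (hθ : ∀ i, Filter.Tendsto
      (fun r : ℝ => (volume ((x i +ᵥ P) ∩ Metric.ball v r)).toReal
        / (volume (Metric.ball v r)).toReal)
      (nhdsWithin 0 (Set.Ioi 0)) (nhds (θ i))) :
    (k : ℝ) = (∑ᶠ i ∈ {i : ℕ | v ∈ frontier (x i +ᵥ P)}, θ i)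
      + ({i : ℕ | v ∈ interior (x i +ᵥ P)}.ncard : ℝ) := by
  classical
  haveI : NeZero (2 * m) := ⟨by omega⟩
  have hPconv : Convex ℝ P := hP ▸ convex_convexHull ℝ _
  have hPclosed : IsClosed P := by
    rw [hP]; exact ((Set.finite_range V).isCompact_convexHull ℝ).isClosed
  have hclosed : ∀ i, IsClosed (x i +ᵥ P) := fun i => hPclosed.vadd _
  have hmeas : ∀ i, MeasurableSet (x i +ᵥ P) := fun i => (hclosed i).measurableSet
  have hfront0 : ∀ i, volume (frontier (x i +ᵥ P)) = 0 :=
    fun i => (hPconv.vadd _).addHaar_frontier volume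
  set S : Set ℕ := {i | ((x i +ᵥ P) ∩ Metric.closedBall v 1).Nonempty} with hSdef
  have hSfin : S.Finite := hdisc _ (isCompact_closedBall v 1)
  have hmemS : ∀ i, v ∈ x i +ᵥ P → i ∈ S := fun i hi =>
    ⟨v, hi, Metric.mem_closedBall_self zero_le_one⟩
  set F : Finset ℕ := hSfin.toFinset with hFdef
  have hFmem : ∀ i, i ∈ F ↔ i ∈ S := fun i => hSfin.mem_toFinset
  -- the key measure identity
  have key : ∀ r : ℝ, 0 < r → r ≤ 1 →
      ∑ i ∈ F, volume ((x i +ᵥ P) ∩ Metric.ball v r)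
        = k * volume (Metric.ball v r) := by
    intro r hr hr1
    set B := Metric.ball v r with hBdef
    have hBmeas : MeasurableSet B := measurableSet_ball
    have hFr : volume (⋃ i ∈ S, frontier (x i +ᵥ P)) = 0 :=
      (measure_biUnion_null_iff hSfin.countable).mpr fun i _ => hfront0 i
    have hae : ∀ᵐ p ∂(volume.restrict B),
        ∑ i ∈ F, (x i +ᵥ P).indicator (fun _ => (1 : ℝ≥0∞)) p = (k : ℝ≥0∞) := by
      have h1 : ∀ᵐ p ∂(volume.restrict B), p ∉ ⋃ i ∈ S, frontier (x i +ᵥ P) :=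
        ae_restrict_of_ae (measure_eq_zero_iff_ae_notMem.mp hFr)
      filter_upwards [h1, ae_restrict_mem hBmeas] with p hpF hpB
      have hTsub : {i | p ∈ x i +ᵥ P} ⊆ S := fun i hi =>
        ⟨p, hi, Metric.mem_closedBall.mpr (le_trans (le_of_lt (Metric.mem_ball.mp hpB)) hr1)⟩
      have hTeq : {i | p ∈ x i +ᵥ P} = {i | p ∈ x i +ᵥ interior P} := by
        ext i
        simp only [Set.mem_setOf_eq]
        constructor
        · intro hi
          have hiS : i ∈ S := hTsub hi
          have hpf : p ∉ frontier (x i +ᵥ P) := fun h => hpF (Set.mem_biUnion hiS h)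
          have hint : p ∈ interior (x i +ᵥ P) := by
            rw [(hclosed i).frontier_eq] at hpf
            by_contra h
            exact hpf ⟨hi, h⟩
          rwa [interior_vadd] at hint
        · intro hi
          have hint : p ∈ interior (x i +ᵥ P) := by rw [interior_vadd]; exact hi
          exact interior_subset hint
      have hcard : {i | p ∈ x i +ᵥ P}.ncard = k :=
        le_antisymm (hTeq ▸ (htile p).2) (htile p).1
      have hfilt : {i | p ∈ x i +ᵥ P} = ↑(F.filter (fun i => p ∈ x i +ᵥ P)) := by
        ext i
        simp only [Finset.coe_filter, Set.mem_setOf_eq, hFmem]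
        exact ⟨fun hi => ⟨hTsub hi, hi⟩, fun hi => hi.2⟩
      have hcard' : (F.filter (fun i => p ∈ x i +ᵥ P)).card = k := by
        rw [← Set.ncard_coe_finset, ← hfilt, hcard]
      simp only [Set.indicator_apply]
      rw [Finset.sum_boole, hcard']
    calc ∑ i ∈ F, volume ((x i +ᵥ P) ∩ B)
        = ∑ i ∈ F, ∫⁻ p, (x i +ᵥ P).indicator (fun _ => (1 : ℝ≥0∞)) p
            ∂(volume.restrict B) := by
          refine Finset.sum_congr rfl fun i _ => ?_
          rw [lintegral_indicator_const (hmeas i), one_mul,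
            Measure.restrict_apply (hmeas i)]
      _ = ∫⁻ p, ∑ i ∈ F, (x i +ᵥ P).indicator (fun _ => (1 : ℝ≥0∞)) p
            ∂(volume.restrict B) :=
          (lintegral_finset_sum F fun i _ =>
            (measurable_const.indicator (hmeas i))).symm
      _ = ∫⁻ _, (k : ℝ≥0∞) ∂(volume.restrict B) := lintegral_congr_ae hae
      _ = k * volume B := by
          rw [lintegral_const, Measure.restrict_apply_univ]
  -- the ratio identity
  have ratio : ∀ r : ℝ, 0 < r → r ≤ 1 →
      ∑ i ∈ F, (volume ((x i +ᵥ P) ∩ Metric.ball v r)).toReal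
        / (volume (Metric.ball v r)).toReal = (k : ℝ) := by
    intro r hr hr1
    have hBpos : 0 < volume (Metric.ball v r) := Metric.measure_ball_pos _ _ hr
    have hBlt : volume (Metric.ball v r) < ⊤ := measure_ball_lt_top
    have hBne : (volume (Metric.ball v r)).toReal ≠ 0 :=
      (ENNReal.toReal_pos hBpos.ne' hBlt.ne).ne'
    rw [← Finset.sum_div, div_eq_iff hBne]
    have hfin : ∀ i ∈ F, volume ((x i +ᵥ P) ∩ Metric.ball v r) ≠ ⊤ := fun i _ =>
      (lt_of_le_of_lt (measure_mono Set.inter_subset_right) hBlt).ne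
    rw [← ENNReal.toReal_sum hfin, key r hr hr1, ENNReal.toReal_mul]
    simp
  -- sum of θ over S is k
  have hsumθ : ∑ i ∈ F, θ i = (k : ℝ) := by
    have h1 : Filter.Tendsto
        (fun r : ℝ => ∑ i ∈ F, (volume ((x i +ᵥ P) ∩ Metric.ball v r)).toReal
          / (volume (Metric.ball v r)).toReal)
        (nhdsWithin 0 (Set.Ioi 0)) (nhds (∑ i ∈ F, θ i)) :=
      tendsto_finset_sum F fun i _ => hθ i
    have h2 : Filter.Tendsto
        (fun r : ℝ => ∑ i ∈ F, (volume ((x i +ᵥ P) ∩ Metric.ball v r)).toReal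
          / (volume (Metric.ball v r)).toReal)
        (nhdsWithin 0 (Set.Ioi 0)) (nhds (k : ℝ)) := by
      refine Filter.Tendsto.congr' ?_ tendsto_const_nhds
      filter_upwards [Ioc_mem_nhdsGT_of_mem (Set.mem_Ico.mpr ⟨le_refl (0:ℝ), zero_lt_one⟩)]
        with r hr
      exact (ratio r hr.1 hr.2).symm
    exact tendsto_nhds_unique h1 h2
  -- θ = 1 for interior translates
  have hθ1 : ∀ i, v ∈ interior (x i +ᵥ P) → θ i = 1 := by
    intro i hi
    obtain ⟨ε, hε, hball⟩ := Metric.isOpen_iff.mp isOpen_interior v hi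
    refine tendsto_nhds_unique (hθ i) ?_
    refine Filter.Tendsto.congr' ?_ tendsto_const_nhds
    filter_upwards [Ioo_mem_nhdsGT_of_mem (Set.mem_Ico.mpr ⟨le_refl (0:ℝ), hε⟩)] with r hr
    have hsub : Metric.ball v r ⊆ x i +ᵥ P :=
      (Metric.ball_subset_ball hr.2.le).trans (hball.trans interior_subset)
    rw [Set.inter_eq_self_of_subset_right hsub]
    have hBpos : 0 < volume (Metric.ball v r) := Metric.measure_ball_pos _ _ hr.1
    have hBlt : volume (Metric.ball v r) < ⊤ := measure_ball_lt_top
    exact (div_self (ENNReal.toReal_pos hBpos.ne' hBlt.ne).ne').symm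
  -- θ = 0 for translates not containing v
  have hθ0 : ∀ i, v ∉ x i +ᵥ P → θ i = 0 := by
    intro i hi
    obtain ⟨ε, hε, hball⟩ :=
      Metric.isOpen_iff.mp (hclosed i).isOpen_compl v hi
    refine tendsto_nhds_unique (hθ i) ?_
    refine Filter.Tendsto.congr' ?_ tendsto_const_nhds
    filter_upwards [Ioo_mem_nhdsGT_of_mem (Set.mem_Ico.mpr ⟨le_refl (0:ℝ), hε⟩)] with r hr
    have hempty : (x i +ᵥ P) ∩ Metric.ball v r = ∅ := by
      apply Set.eq_empty_of_forall_notMem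
      intro p hp
      exact hball ((Metric.ball_subset_ball hr.2.le) hp.2) hp.1
    rw [hempty]
    simp
  -- split the sum
  set Fr : Finset ℕ := F.filter (fun i => v ∈ frontier (x i +ᵥ P)) with hFrdef
  set In : Finset ℕ := F.filter (fun i => v ∈ interior (x i +ᵥ P)) with hIndef
  have hFrset : {i : ℕ | v ∈ frontier (x i +ᵥ P)} = ↑Fr := by
    ext i
    simp only [hFrdef, Finset.coe_filter, Set.mem_setOf_eq, hFmem]
    exact ⟨fun hi => ⟨hmemS i ((hclosed i).frontier_subset hi), hi⟩, fun hi => hi.2⟩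
  have hInset : {i : ℕ | v ∈ interior (x i +ᵥ P)} = ↑In := by
    ext i
    simp only [hIndef, Finset.coe_filter, Set.mem_setOf_eq, hFmem]
    exact ⟨fun hi => ⟨hmemS i (interior_subset hi), hi⟩, fun hi => hi.2⟩
  have hsplit : ∑ i ∈ F, θ i = ∑ i ∈ Fr, θ i + ∑ i ∈ In, θ i := by
    rw [← Finset.sum_filter_add_sum_filter_not F (fun i => v ∈ x i +ᵥ P)]
    have h0 : ∑ i ∈ F.filter (fun i => v ∉ x i +ᵥ P), θ i = 0 :=
      Finset.sum_eq_zero fun i hi => hθ0 i (Finset.mem_filter.mp hi).2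
    have e1 : (F.filter (fun i => v ∈ x i +ᵥ P)).filter
        (fun i => v ∈ frontier (x i +ᵥ P)) = Fr := by
      ext i
      simp only [hFrdef, Finset.mem_filter]
      exact ⟨fun h => ⟨h.1.1, h.2⟩,
        fun h => ⟨⟨h.1, (hclosed i).frontier_subset h.2⟩, h.2⟩⟩
    have e2 : (F.filter (fun i => v ∈ x i +ᵥ P)).filter
        (fun i => ¬ v ∈ frontier (x i +ᵥ P)) = In := by
      ext i
      simp only [hIndef, Finset.mem_filter]
      constructor
      · rintro ⟨⟨h1, h2⟩, h3⟩
        refine ⟨h1, ?_⟩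
        rw [(hclosed i).frontier_eq] at h3
        by_contra h
        exact h3 ⟨h2, h⟩
      · rintro ⟨h1, h2⟩
        refine ⟨⟨h1, interior_subset h2⟩, ?_⟩
        rw [(hclosed i).frontier_eq]
        rintro ⟨-, h3⟩
        exact h3 h2
    rw [h0, add_zero,
      ← Finset.sum_filter_add_sum_filter_not (F.filter (fun i => v ∈ x i +ᵥ P))
        (fun i => v ∈ frontier (x i +ᵥ P)), e1, e2]
  have hInsum : ∑ i ∈ In, θ i = (In.card : ℝ) := by
    rw [Finset.sum_congr rfl (fun i hi => hθ1 i (Finset.mem_filter.mp hi).2)]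
    simp [hIndef]
  rw [hFrset, hInset, finsum_mem_coe_finset, Set.ncard_coe_finset,
    ← hInsum, ← hsplit, hsumθ]
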